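/- Let X be a real random variable, κ > 0, and suppose the function f̂(s) = e^{−s}∫_{−∞}^s e^{(κ+1)y} P(X > e^y) dy satisfies m(s)·f̂(s) → c as s → ∞, where m is nondecreasing and m(log x) is slowly varying. Then m(log x)·x^κ·P(X > x) → c·(κ+1)/(κ+1) = c, i.e. lim_{x→∞} m(log x) x^κ P(X > x) = c. (Unsmoothing/Tauberian step.) -/

import Mathlib

open MeasureTheory Filter Set

private lemma intExpMul (a b k : ℝ) (hk : k ≠ 0) :
    ∫ x in a..b, Real.exp (k*x) = (Real.exp (k*b) - Real.exp (k*a))/k := by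
  rw [intervalIntegral.integral_comp_mul_left (fun x => Real.exp x) hk, integral_exp]
  rw [smul_eq_mul]; ring

private lemma intOnExp (k s : ℝ) (hk : 0 < k) :
    IntegrableOn (fun y => Real.exp (k*y)) (Iic s) := by
  refine integrableOn_Iic_of_intervalIntegral_norm_bounded (Real.exp (k*s)/k) s
    (fun i => ((Real.continuous_exp.comp (continuous_const.mul continuous_id)).integrableOn_Ioc))
    tendsto_id ?_
  filter_upwards with i
  simp_rw [Real.norm_of_nonneg (Real.exp_pos _).le, intExpMul _ _ _ hk.ne']
  have h0 := (Real.exp_pos (k*i)).le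
  have h1 : Real.exp (k*s) - Real.exp (k*i) ≤ Real.exp (k*s) := by linarith
  exact div_le_div_of_nonneg_right h1 hk.le

private lemma expSlope (k : ℝ) :
    Tendsto (fun δ => (Real.exp (k*δ) - 1)/δ) (nhdsWithin 0 (Ioi (0:ℝ))) (nhds k) := by
  have h : HasDerivAt (fun δ : ℝ => Real.exp (k*δ)) k 0 := by
    have := (Real.hasDerivAt_exp (k*0)).comp 0 ((hasDerivAt_id (0:ℝ)).const_mul k)
    simpa [Function.comp_def] using this
  rw [hasDerivAt_iff_tendsto_slope] at h
  have hmono : nhdsWithin (0:ℝ) (Ioi 0) ≤ nhdsWithin 0 {(0:ℝ)}ᶜ :=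
    nhdsWithin_mono 0 (fun x hx => ne_of_gt hx)
  refine (h.mono_left hmono).congr (fun δ => ?_)
  simp [slope_fun_def_field]

private lemma expRatio (a b : ℝ) (hb : b ≠ 0) :
    Tendsto (fun δ => (Real.exp (a*δ) - 1)/(Real.exp (b*δ) - 1))
      (nhdsWithin 0 (Ioi (0:ℝ))) (nhds (a/b)) := by
  have h := (expSlope a).div (expSlope b) hb
  refine h.congr' ?_
  filter_upwards [self_mem_nhdsWithin] with δ (hδ : 0 < δ)
  simp only [Pi.div_apply]
  rw [div_div_div_comm, div_self hδ.ne', div_one]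

theorem stmt_12 {Ω : Type*} [MeasurableSpace Ω] (μ : Measure Ω) [IsProbabilityMeasure μ]
    (X : Ω → ℝ) (hX : Measurable X) (κ : ℝ) (hκ : 0 < κ)
    (m : ℝ → ℝ) (hmono : Monotone m) (hmpos : ∀ x, 0 < m x)
    (hslow : ∀ l > 0,
      Tendsto (fun x => m (Real.log (l * x)) / m (Real.log x)) atTop (nhds 1))
    (fhat : ℝ → ℝ)
    (hfhat : ∀ s, fhat s =
      Real.exp (-s) * ∫ y in Set.Iic s, Real.exp ((κ + 1) * y) * (μ {ω | X ω > Real.exp y}).toReal)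
    (c : ℝ) (hconv : Tendsto (fun s => m s * fhat s) atTop (nhds c)) :
    Tendsto (fun x => m (Real.log x) * x ^ κ * (μ {ω | X ω > x}).toReal) atTop (nhds c) := by
  have hκ1 : (0:ℝ) < κ + 1 := by linarith
  set p : ℝ → ℝ := fun t => (μ {ω | X ω > Real.exp t}).toReal with hp
  set G : ℝ → ℝ := fun y => Real.exp ((κ+1)*y) * p y with hG
  set F : ℝ → ℝ := fun t => ∫ y in Iic t, G y with hF
  -- basic properties of p
  have hpm : Measurable p := by
    have h1 : Measurable fun t : ℝ => μ {ω | X ω > t} :=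
      Antitone.measurable (fun s t hst => measure_mono (fun ω h => lt_of_le_of_lt hst h))
    exact (h1.comp Real.measurable_exp).ennreal_toReal
  have hp0 : ∀ t, 0 ≤ p t := fun t => ENNReal.toReal_nonneg
  have hp1 : ∀ t, p t ≤ 1 := fun t => by
    simpa using ENNReal.toReal_mono (by simp) (prob_le_one (μ := μ))
  have hpanti : Antitone p := fun s t hst =>
    ENNReal.toReal_mono (measure_ne_top μ _)
      (measure_mono (fun ω h => lt_of_le_of_lt (Real.exp_le_exp.2 hst) h))
  -- integrability
  have hGmeas : Measurable G := ((measurable_id.const_mul (κ+1)).exp).mul hpm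
  have hGint : ∀ t, IntegrableOn G (Iic t) := by
    intro t
    refine Integrable.mono (intOnExp (κ+1) t hκ1) hGmeas.aestronglyMeasurable ?_
    filter_upwards with y
    rw [Real.norm_eq_abs, Real.norm_eq_abs, abs_of_nonneg (Real.exp_pos _).le,
      abs_of_nonneg (mul_nonneg (Real.exp_pos _).le (hp0 y))]
    exact mul_le_of_le_one_right (Real.exp_pos _).le (hp1 y)
  have hdiff : ∀ s t : ℝ, s ≤ t → F t - F s = ∫ y in Ioc s t, G y := by
    intro s t hst
    have hun : Iic s ∪ Ioc s t = Iic t := Iic_union_Ioc_eq_Iic hst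
    have := setIntegral_union (f := G) (μ := volume) (Set.Iic_disjoint_Ioc le_rfl)
      measurableSet_Ioc (hGint s) ((hGint t).mono_set Ioc_subset_Iic_self)
    rw [hun] at this
    rw [hF]; simp only; rw [this]; ring
  have hfhatF : ∀ t, fhat t = Real.exp (-t) * F t := fun t => hfhat t
  -- sandwich inequalities
  have Eval : ∀ s t : ℝ, s ≤ t →
      ∫ y in Ioc s t, Real.exp ((κ+1)*y)
        = (Real.exp ((κ+1)*t) - Real.exp ((κ+1)*s))/(κ+1) := by
    intro s t hst
    rw [← intervalIntegral.integral_of_le hst, intExpMul _ _ _ hκ1.ne']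
  have hup : ∀ s δ : ℝ, 0 < δ → F (s+δ) - F s
      ≤ p s * ((Real.exp ((κ+1)*(s+δ)) - Real.exp ((κ+1)*s))/(κ+1)) := by
    intro s δ hδ
    rw [hdiff s (s+δ) (by linarith)]
    have h1 : ∫ y in Ioc s (s+δ), G y ≤ ∫ y in Ioc s (s+δ), p s * Real.exp ((κ+1)*y) := by
      refine setIntegral_mono_on ((hGint (s+δ)).mono_set Ioc_subset_Iic_self)
        (((Real.continuous_exp.comp (continuous_const.mul continuous_id)).integrableOn_Ioc).const_mul _)
        measurableSet_Ioc (fun y hy => ?_)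
      rw [hG]; simp only
      rw [mul_comm (p s)]
      exact mul_le_mul_of_nonneg_left (hpanti hy.1.le) (Real.exp_pos _).le
    rw [integral_const_mul, Eval s (s+δ) (by linarith)] at h1
    exact h1
  have hlo : ∀ s δ : ℝ, 0 < δ →
      p s * ((Real.exp ((κ+1)*s) - Real.exp ((κ+1)*(s-δ)))/(κ+1)) ≤ F s - F (s-δ) := by
    intro s δ hδ
    rw [hdiff (s-δ) s (by linarith)]
    have h1 : ∫ y in Ioc (s-δ) s, p s * Real.exp ((κ+1)*y) ≤ ∫ y in Ioc (s-δ) s, G y := by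
      refine setIntegral_mono_on
        (((Real.continuous_exp.comp (continuous_const.mul continuous_id)).integrableOn_Ioc).const_mul _)
        ((hGint s).mono_set Ioc_subset_Iic_self)
        measurableSet_Ioc (fun y hy => ?_)
      rw [hG]; simp only
      rw [mul_comm (p s)]
      exact mul_le_mul_of_nonneg_left (hpanti hy.2) (Real.exp_pos _).le
    rw [integral_const_mul, Eval (s-δ) s (by linarith)] at h1
    exact h1
  -- ratio lemmas for m
  have hmne : ∀ x, m x ≠ 0 := fun x => (hmpos x).ne'
  have hrat : ∀ δ : ℝ, Tendsto (fun s => m (s + δ) / m s) atTop (nhds 1) := by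
    intro δ
    have h := (hslow (Real.exp δ) (Real.exp_pos δ)).comp Real.tendsto_exp_atTop
    refine h.congr (fun s => ?_)
    simp only [Function.comp]
    rw [← Real.exp_add, Real.log_exp, Real.log_exp, add_comm δ s]
  have hratinv : ∀ δ : ℝ, Tendsto (fun s => m s / m (s + δ)) atTop (nhds 1) := by
    intro δ
    have := ((hrat δ).inv₀ one_ne_zero)
    rw [inv_one] at this
    refine this.congr (fun s => ?_)
    rw [inv_div]
  -- three shifted limits
  have key0 : Tendsto (fun s => m s * Real.exp (-s) * F s) atTop (nhds c) := by
    refine hconv.congr (fun s => ?_)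
    rw [hfhatF s]; ring
  have key1 : ∀ δ : ℝ, Tendsto (fun s => m s * Real.exp (-s) * F (s+δ)) atTop
      (nhds (Real.exp δ * c)) := by
    intro δ
    have h1 : Tendsto (fun s => m (s+δ) * fhat (s+δ)) atTop (nhds c) :=
      hconv.comp (tendsto_atTop_add_const_right atTop δ tendsto_id)
    have h2 := (hratinv δ).mul (tendsto_const_nhds (x := Real.exp δ) (f := atTop)|>.mul h1)
    rw [one_mul] at h2
    refine h2.congr (fun s => ?_)
    rw [hfhatF (s+δ), show -(s+δ) = -s + -δ by ring, Real.exp_add, Real.exp_neg δ]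
    field_simp [hmne (s+δ)]
  have key2 : ∀ δ : ℝ, Tendsto (fun s => m s * Real.exp (-s) * F (s-δ)) atTop
      (nhds (Real.exp (-δ) * c)) := by
    intro δ
    have h1 : Tendsto (fun s => m (s-δ) * fhat (s-δ)) atTop (nhds c) := by
      have := hconv.comp (tendsto_atTop_add_const_right atTop (-δ) tendsto_id)
      refine this.congr (fun s => ?_)
      simp [sub_eq_add_neg]
    have hr : Tendsto (fun s => m s / m (s - δ)) atTop (nhds 1) := by
      have := (hrat δ).comp (tendsto_atTop_add_const_right atTop (-δ) tendsto_id)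
      refine this.congr (fun s => ?_)
      simp only [Function.comp_apply, id_eq]
      rw [show s + -δ + δ = s by ring, sub_eq_add_neg]
    have h2 := hr.mul (tendsto_const_nhds (x := Real.exp (-δ)) (f := atTop)|>.mul h1)
    rw [one_mul] at h2
    refine h2.congr (fun s => ?_)
    rw [hfhatF (s-δ), show -(s-δ) = -s + δ by ring, Real.exp_add, Real.exp_neg δ]
    field_simp [hmne (s-δ)]
  -- main limit in the log variable
  have hT : Tendsto (fun s => m s * Real.exp (κ*s) * p s) atTop (nhds c) := by
    rw [Metric.tendsto_nhds]
    intro ε hε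
    -- choose δ
    have hLlim : Tendsto (fun δ => (κ+1) * c *
        ((Real.exp (1*δ) - 1)/(Real.exp ((κ+1)*δ) - 1)))
        (nhdsWithin 0 (Ioi (0:ℝ))) (nhds c) := by
      have := (tendsto_const_nhds (x := (κ+1)*c) (f := nhdsWithin 0 (Ioi (0:ℝ)))).mul
        (expRatio 1 (κ+1) hκ1.ne')
      convert this using 2
      field_simp
    have hUlim : Tendsto (fun δ => (κ+1) * c *
        ((Real.exp ((-1)*δ) - 1)/(Real.exp ((-(κ+1))*δ) - 1)))
        (nhdsWithin 0 (Ioi (0:ℝ))) (nhds c) := by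
      have := (tendsto_const_nhds (x := (κ+1)*c) (f := nhdsWithin 0 (Ioi (0:ℝ)))).mul
        (expRatio (-1) (-(κ+1)) (by linarith))
      convert this using 2
      rw [neg_div_neg_eq]
      field_simp
    have hev := ((hLlim.eventually (Metric.ball_mem_nhds c (by linarith : (0:ℝ) < ε/2))).and
      ((hUlim.eventually (Metric.ball_mem_nhds c (by linarith : (0:ℝ) < ε/2))).and
        self_mem_nhdsWithin)).exists
    obtain ⟨δ, hLδ, hUδ, (hδ : 0 < δ)⟩ := hev
    rw [Real.dist_eq] at hLδ hUδ
    set D : ℝ := Real.exp ((κ+1)*δ) - 1 with hD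
    set D' : ℝ := 1 - Real.exp (-((κ+1)*δ)) with hD'
    have hDpos : 0 < D := by
      rw [hD, sub_pos]; exact Real.one_lt_exp_iff.2 (by positivity)
    have hD'pos : 0 < D' := by
      rw [hD', sub_pos]; exact Real.exp_lt_one_iff.2 (by simp; positivity)
    -- lower bound function A and upper bound function B
    have hA : Tendsto (fun s => (κ+1)/D *
        (m s * Real.exp (-s) * F (s+δ) - m s * Real.exp (-s) * F s)) atTop
        (nhds ((κ+1) * c * ((Real.exp (1*δ) - 1)/(Real.exp ((κ+1)*δ) - 1)))) := by
      have := (tendsto_const_nhds (x := (κ+1)/D) (f := atTop)).mul ((key1 δ).sub key0)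
      convert this using 2
      rw [hD, one_mul]
      field_simp
    have hB : Tendsto (fun s => (κ+1)/D' *
        (m s * Real.exp (-s) * F s - m s * Real.exp (-s) * F (s-δ))) atTop
        (nhds ((κ+1) * c * ((Real.exp ((-1)*δ) - 1)/(Real.exp ((-(κ+1))*δ) - 1)))) := by
      have := (tendsto_const_nhds (x := (κ+1)/D') (f := atTop)).mul (key0.sub (key2 δ))
      convert this using 2
      rw [hD', neg_one_mul, show (-(κ+1))*δ = -((κ+1)*δ) by ring]
      have h1 : Real.exp (-((κ+1)*δ)) - 1 = -(1 - Real.exp (-((κ+1)*δ))) := by ring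
      rw [h1, div_neg, ← neg_div, neg_sub]
      have hne : (1 - Real.exp (-((κ+1)*δ))) ≠ 0 := hD'pos.ne'
      field_simp
    -- pointwise sandwich
    have hAT : ∀ s, (κ+1)/D *
        (m s * Real.exp (-s) * F (s+δ) - m s * Real.exp (-s) * F s)
        ≤ m s * Real.exp (κ*s) * p s := by
      intro s
      have h1 := hup s δ hδ
      have hms : 0 ≤ m s * Real.exp (-s) := (mul_pos (hmpos s) (Real.exp_pos _)).le
      have h2 : m s * Real.exp (-s) * (F (s+δ) - F s)
          ≤ m s * Real.exp (-s) * (p s * ((Real.exp ((κ+1)*(s+δ)) - Real.exp ((κ+1)*s))/(κ+1))) :=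
        mul_le_mul_of_nonneg_left h1 hms
      have h3 : (κ+1)/D * (m s * Real.exp (-s) * (F (s+δ) - F s))
          ≤ (κ+1)/D * (m s * Real.exp (-s) *
            (p s * ((Real.exp ((κ+1)*(s+δ)) - Real.exp ((κ+1)*s))/(κ+1)))) :=
        mul_le_mul_of_nonneg_left h2 (by positivity)
      have e1 : Real.exp ((κ+1)*(s+δ)) = Real.exp ((κ+1)*s) * Real.exp ((κ+1)*δ) := by
        rw [← Real.exp_add]; ring_nf
      have e2 : Real.exp (-s) * Real.exp ((κ+1)*s) = Real.exp (κ*s) := by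
        rw [← Real.exp_add]; ring_nf
      calc (κ+1)/D * (m s * Real.exp (-s) * F (s+δ) - m s * Real.exp (-s) * F s)
          = (κ+1)/D * (m s * Real.exp (-s) * (F (s+δ) - F s)) := by ring
        _ ≤ (κ+1)/D * (m s * Real.exp (-s) *
            (p s * ((Real.exp ((κ+1)*(s+δ)) - Real.exp ((κ+1)*s))/(κ+1)))) := h3
        _ = m s * Real.exp (κ*s) * p s := by
            rw [e1, ← e2, hD]
            have hne : Real.exp ((κ+1)*δ) - 1 ≠ 0 := hDpos.ne'
            field_simp
    have hBT : ∀ s, m s * Real.exp (κ*s) * p s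
        ≤ (κ+1)/D' * (m s * Real.exp (-s) * F s - m s * Real.exp (-s) * F (s-δ)) := by
      intro s
      have h1 := hlo s δ hδ
      have hms : 0 ≤ m s * Real.exp (-s) := (mul_pos (hmpos s) (Real.exp_pos _)).le
      have h2 : m s * Real.exp (-s) *
          (p s * ((Real.exp ((κ+1)*s) - Real.exp ((κ+1)*(s-δ)))/(κ+1)))
          ≤ m s * Real.exp (-s) * (F s - F (s-δ)) :=
        mul_le_mul_of_nonneg_left h1 hms
      have h3 : (κ+1)/D' * (m s * Real.exp (-s) *
            (p s * ((Real.exp ((κ+1)*s) - Real.exp ((κ+1)*(s-δ)))/(κ+1))))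
          ≤ (κ+1)/D' * (m s * Real.exp (-s) * (F s - F (s-δ))) :=
        mul_le_mul_of_nonneg_left h2 (by positivity)
      have e1 : Real.exp ((κ+1)*(s-δ)) = Real.exp ((κ+1)*s) * Real.exp (-((κ+1)*δ)) := by
        rw [← Real.exp_add]; ring_nf
      have e2 : Real.exp (-s) * Real.exp ((κ+1)*s) = Real.exp (κ*s) := by
        rw [← Real.exp_add]; ring_nf
      calc m s * Real.exp (κ*s) * p s
          = (κ+1)/D' * (m s * Real.exp (-s) *
            (p s * ((Real.exp ((κ+1)*s) - Real.exp ((κ+1)*(s-δ)))/(κ+1)))) := by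
            rw [e1, ← e2, hD']
            have hne : 1 - Real.exp (-((κ+1)*δ)) ≠ 0 := hD'pos.ne'
            field_simp
        _ ≤ (κ+1)/D' * (m s * Real.exp (-s) * (F s - F (s-δ))) := h3
        _ = (κ+1)/D' * (m s * Real.exp (-s) * F s - m s * Real.exp (-s) * F (s-δ)) := by ring
    -- conclude
    have hLgt : c - ε < (κ+1) * c * ((Real.exp (1*δ) - 1)/(Real.exp ((κ+1)*δ) - 1)) := by
      have := abs_lt.1 hLδ
      linarith [this.1]
    have hUlt : (κ+1) * c * ((Real.exp ((-1)*δ) - 1)/(Real.exp ((-(κ+1))*δ) - 1)) < c + ε := by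
      have := abs_lt.1 hUδ
      linarith [this.2]
    filter_upwards [hA.eventually (eventually_gt_nhds hLgt),
      hB.eventually (eventually_lt_nhds hUlt)] with s hAs hBs
    rw [Real.dist_eq, abs_lt]
    constructor
    · linarith [hAT s]
    · linarith [hBT s]
  -- transfer back to the x variable
  have hcomp := hT.comp Real.tendsto_log_atTop
  refine hcomp.congr' ?_
  filter_upwards [eventually_gt_atTop (0:ℝ)] with x hx
  simp only [Function.comp_apply, hp]
  rw [Real.exp_log hx, Real.rpow_def_of_pos hx, mul_comm (Real.log x) κ]
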